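/- For every integer d ≥ 1 and every integer m with 0 ≤ m ≤ ⌈d/2⌉, the inequality (⌈d/2⌉ − m + 1) · C(d+1, m) ≤ C(d+1, ⌈d/2⌉) · C(⌈d/2⌉, m) holds, where C(a,b) denotes the binomial coefficient. -/

import Mathlib

lemma succ_le_centralBinom (j : ℕ) : j + 1 ≤ Nat.centralBinom j := by
  induction j with
  | zero => simp [Nat.centralBinom]
  | succ n ih =>
    have h := Nat.succ_mul_centralBinom_succ n
    have h2 : (n + 1) * (2 * Nat.centralBinom n) ≤ (n + 1) * Nat.centralBinom (n + 1) := by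
      rw [h]; ring_nf; nlinarith [Nat.centralBinom_pos n]
    have h3 : 2 * Nat.centralBinom n ≤ Nat.centralBinom (n + 1) :=
      Nat.le_of_mul_le_mul_left h2 (Nat.succ_pos n)
    omega

theorem choose_weighted_inequality (d m : ℕ) (hd : 1 ≤ d) (hm : m ≤ (d + 1) / 2) :
    ((d + 1) / 2 - m + 1) * Nat.choose (d + 1) m ≤
      Nat.choose (d + 1) ((d + 1) / 2) * Nat.choose ((d + 1) / 2) m := by
  set k := (d + 1) / 2 with hk
  have hk1 : k ≤ d + 1 := Nat.div_le_self _ _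
  have hident := Nat.choose_mul (n := d + 1) hm
  rw [hident]
  rw [Nat.mul_comm]
  apply Nat.mul_le_mul_left
  -- goal: k - m + 1 ≤ (d + 1 - m).choose (k - m)
  have h2k : 2 * k ≤ d + 1 := by rw [hk]; exact Nat.mul_div_le _ 2
  have hle : 2 * (k - m) ≤ d + 1 - m := by omega
  calc k - m + 1 ≤ Nat.centralBinom (k - m) := succ_le_centralBinom _
    _ = (2 * (k - m)).choose (k - m) := rfl
    _ ≤ (d + 1 - m).choose (k - m) := Nat.choose_le_choose _ hle
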